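/- Let k > 1 be an integer. A k-irreducible pair {A,B} satisfies |A| + |B| = 2k − 1 if and only if (up to swapping A and B) A consists of k−1 copies of k and B consists of k copies of k−1. -/

import Mathlib

/-- `{A,B}` is an irreducible pair: nonempty multisets of positive integers with equal
sums such that no nonempty proper submultisets `A' < A`, `B' < B` have equal sums. -/
def IrredPair (A B : Multiset ℕ) : Prop :=
  A ≠ 0 ∧ B ≠ 0 ∧ (∀ x ∈ A, 0 < x) ∧ (∀ x ∈ B, 0 < x) ∧
  A.sum = B.sum ∧
  ∀ A' B' : Multiset ℕ, A' < A → B' < B → A' ≠ 0 → B' ≠ 0 → A'.sum ≠ B'.sum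

/-- `{A,B}` is a `k`-irreducible pair: irreducible and all elements are at most `k`. -/
def KIrredPair (k : ℕ) (A B : Multiset ℕ) : Prop :=
  IrredPair A B ∧ (∀ x ∈ A, x ≤ k) ∧ (∀ x ∈ B, x ≤ k)

/-- Maximum element of a multiset of naturals (0 for the empty multiset). -/
def msetMax (S : Multiset ℕ) : ℕ := S.fold max 0

/-- A zero-sum multiset of integers is irreducible if it has no proper nonempty
zero-sum submultiset. -/
def IrredZeroSum (S : Multiset ℤ) : Prop :=
  ¬ ∃ T : Multiset ℤ, T ≤ S ∧ T ≠ 0 ∧ T ≠ S ∧ T.sum = 0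

namespace Stmt7Aux

def G : ℤ → List ℤ → Prop
  | _, [] => True
  | d, z :: t => (if d < 0 then 0 < z else z < 0) ∧ G (d + z) t

/-- Prefix values `d_0, ..., d_{N-1}` (value before each step). -/

def pv : ℤ → List ℤ → List ℤ
  | _, [] => []
  | d, z :: t => d :: pv (d + z) t

theorem length_pv (d : ℤ) (l : List ℤ) : (pv d l).length = l.length := by
  induction l generalizing d with
  | nil => rfl
  | cons z t ih => simp [pv, ih]

theorem pv_get (d : ℤ) (l : List ℤ) (i : ℕ) (h : i < l.length) :
    (pv d l).get ⟨i, by rw [length_pv]; exact h⟩ = d + (l.take i).sum := by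
  induction l generalizing d i with
  | nil => simp at h
  | cons z t ih =>
    cases i with
    | zero => simp [pv]
    | succ j =>
      simp only [pv, List.get_cons_succ]
      have := ih (d+z) j (by simpa using h)
      simp only [List.get_eq_getElem, List.getElem_cons_succ] at this ⊢
      rw [this]
      simp [add_assoc]

theorem G_nonzero {d : ℤ} {l : List ℤ} (h : G d l) : ∀ z ∈ l, z ≠ 0 := by
  induction l generalizing d with
  | nil => simp
  | cons z t ih =>
    intro w hw
    rcases List.mem_cons.1 hw with rfl | hw
    · obtain ⟨h1, _⟩ := h
      split at h1 <;> omega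
    · exact ih h.2 _ hw

theorem G_countP {d : ℤ} {l : List ℤ} (h : G d l) :
    l.countP (fun z => decide (0 < z)) = (pv d l).countP (fun v => decide (v < 0)) := by
  induction l generalizing d with
  | nil => rfl
  | cons z t ih =>
    obtain ⟨h1, h2⟩ := h
    simp only [pv, List.countP_cons, ih h2]
    by_cases hd : d < 0
    · have hz : (0:ℤ) < z := by rwa [if_pos hd] at h1
      simp [hd, hz, hz.le]
    · have hz : z < 0 := by rwa [if_neg hd] at h1
      simp [hd, hz, hz.le]

theorem G_get {d : ℤ} {l : List ℤ} (h : G d l) (i : ℕ) (hi : i < l.length) :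
    if d + (l.take i).sum < 0 then 0 < l.get ⟨i, hi⟩ else l.get ⟨i, hi⟩ < 0 := by
  induction l generalizing d i with
  | nil => simp at hi
  | cons z t ih =>
    obtain ⟨h1, h2⟩ := h
    cases i with
    | zero => simpa using h1
    | succ j =>
      have := ih h2 j (by simpa using hi)
      rw [List.take_succ_cons, List.sum_cons, ← add_assoc]
      simpa using this

theorem G_range {k : ℕ} {d : ℤ} {l : List ℤ} (h : G d l)
    (hb : ∀ z ∈ l, z ≤ (k : ℤ) ∧ -((k : ℤ) - 1) ≤ z)
    (hd1 : -((k : ℤ) - 1) ≤ d) (hd2 : d ≤ (k : ℤ) - 1) :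
    ∀ v ∈ pv d l, -((k : ℤ) - 1) ≤ v ∧ v ≤ (k : ℤ) - 1 := by
  induction l generalizing d with
  | nil => simp [pv]
  | cons z t ih =>
    intro v hv
    obtain ⟨h1, h2⟩ := h
    obtain ⟨hz1, hz2⟩ := hb z (by simp)
    rcases List.mem_cons.1 hv with rfl | hv
    · exact ⟨hd1, hd2⟩
    · refine ih h2 (fun w hw => hb w (by simp [hw])) ?_ ?_ v hv <;> split at h1 <;> omega

def Pos (l : List ℤ) : Multiset ℤ := ↑(l.filter (fun z => decide (0 < z)))

def Neg (l : List ℤ) : Multiset ℤ := ↑(l.filter (fun z => decide (z < 0)))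

theorem sum_pos' {s : Multiset ℕ} (h : ∀ x ∈ s, 0 < x) (hne : s ≠ 0) : 0 < s.sum := by
  obtain ⟨x, hx⟩ := Multiset.exists_mem_of_ne_zero hne
  have h1 := h x hx
  have h2 := Multiset.le_sum_of_mem hx
  omega

theorem exists_greedy : ∀ (n : ℕ) (α β : Multiset ℕ),
    Multiset.card α + Multiset.card β = n →
    (∀ x ∈ α, 0 < x) → (∀ x ∈ β, 0 < x) →
    ∃ l : List ℤ, G ((β.sum : ℤ) - (α.sum : ℤ)) l ∧
      Pos l = Multiset.map (Nat.cast : ℕ → ℤ) α ∧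
      Neg l = Multiset.map (fun b : ℕ => -(b : ℤ)) β := by
  intro n
  induction n with
  | zero =>
    intro α β hc _ _
    have hα : α = 0 := by rw [← Multiset.card_eq_zero]; omega
    have hβ : β = 0 := by rw [← Multiset.card_eq_zero]; omega
    exact ⟨[], by simp [G], by simp [hα, Pos], by simp [hβ, Neg]⟩
  | succ n ih =>
    intro α β hc hα hβ
    by_cases hd : ((β.sum : ℤ) - α.sum) < 0
    · -- pick from α
      have hαne : α ≠ 0 := by
        intro h
        rw [h] at hd
        simp only [Multiset.sum_zero, Nat.cast_zero, sub_zero] at hd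
        omega
      obtain ⟨a, ha⟩ := Multiset.exists_mem_of_ne_zero hαne
      have hcons : a ::ₘ α.erase a = α := Multiset.cons_erase ha
      have hcard : Multiset.card (α.erase a) + Multiset.card β = n := by
        have := congrArg Multiset.card hcons
        simp only [Multiset.card_cons] at this
        omega
      obtain ⟨l, hG, hP, hN⟩ := ih (α.erase a) β hcard
        (fun x hx => hα x (Multiset.mem_of_mem_erase hx)) hβ
      have hsum0 : a + (α.erase a).sum = α.sum := by
        rw [← Multiset.sum_cons, hcons]
      have hsum : (α.sum : ℤ) = a + ((α.erase a).sum : ℤ) := by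
        exact_mod_cast (congrArg (Nat.cast : ℕ → ℤ) hsum0).symm
      have hapos : (0:ℤ) < a := by exact_mod_cast hα a ha
      refine ⟨(a : ℤ) :: l, ⟨by rw [if_pos hd]; exact hapos, ?_⟩, ?_, ?_⟩
      · have he : (β.sum : ℤ) - α.sum + a = (β.sum : ℤ) - (α.erase a).sum := by
          rw [hsum]; ring
        rw [he]; exact hG
      · have h1 : Pos ((a:ℤ) :: l) = (a:ℤ) ::ₘ Pos l := by
          simp [Pos, List.filter_cons, hapos, hα a ha]
        have h2 := congrArg (Multiset.map (Nat.cast : ℕ → ℤ)) hcons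
        rw [Multiset.map_cons] at h2
        rw [h1, hP, ← h2]
      · have h1 : Neg ((a:ℤ) :: l) = Neg l := by
          simp [Neg, List.filter_cons, not_lt.2 hapos.le]
        rw [h1, hN]
    · -- pick from β
      have hβne : β ≠ 0 := by
        intro h
        rw [h] at hd
        simp only [Multiset.sum_zero, Nat.cast_zero, zero_sub] at hd
        have h0 : α.sum = 0 := by omega
        have hα0 : α = 0 := by
          by_contra hne
          have := sum_pos' hα hne; omega
        rw [hα0, h] at hc; simp at hc
      obtain ⟨b, hb⟩ := Multiset.exists_mem_of_ne_zero hβne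
      have hcons : b ::ₘ β.erase b = β := Multiset.cons_erase hb
      have hcard : Multiset.card α + Multiset.card (β.erase b) = n := by
        have := congrArg Multiset.card hcons
        simp only [Multiset.card_cons] at this
        omega
      obtain ⟨l, hG, hP, hN⟩ := ih α (β.erase b) hcard hα
        (fun x hx => hβ x (Multiset.mem_of_mem_erase hx))
      have hsum0 : b + (β.erase b).sum = β.sum := by
        rw [← Multiset.sum_cons, hcons]
      have hsum : (β.sum : ℤ) = b + ((β.erase b).sum : ℤ) := by
        exact_mod_cast (congrArg (Nat.cast : ℕ → ℤ) hsum0).symm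
      have hbpos : (0:ℤ) < b := by exact_mod_cast hβ b hb
      refine ⟨(-(b : ℤ)) :: l, ⟨by rw [if_neg hd]; omega, ?_⟩, ?_, ?_⟩
      · have he : (β.sum : ℤ) - α.sum + (-(b:ℤ)) = ((β.erase b).sum : ℤ) - α.sum := by
          rw [hsum]; ring
        rw [he]; exact hG
      · have h1 : Pos ((-(b:ℤ)) :: l) = Pos l := by
          simp [Pos, List.filter_cons, show ¬((0:ℤ) < -(b:ℤ)) by omega]
        rw [h1, hP]
      · have h1 : Neg ((-(b:ℤ)) :: l) = (-(b:ℤ)) ::ₘ Neg l := by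
          simp [Neg, List.filter_cons, show (-(b:ℤ) < 0) by omega, hβ b hb]
        have h2 := congrArg (Multiset.map (fun b : ℕ => -(b:ℤ))) hcons
        rw [Multiset.map_cons] at h2
        rw [h1, hN, ← h2]

theorem sum_split (l : List ℤ) (h : ∀ z ∈ l, z ≠ 0) :
    (l.sum : ℤ) = (Pos l).sum + (Neg l).sum := by
  induction l with
  | nil => simp [Pos, Neg]
  | cons z t ih =>
    have hz := h z (by simp)
    have ht := fun w hw => h w (List.mem_cons_of_mem _ hw)
    rcases lt_trichotomy z 0 with hlt | he | hgt
    · simp [Pos, Neg, List.filter_cons, hlt, not_lt.2 hlt.le, ih ht]; ring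
    · exact absurd he hz
    · simp [Pos, Neg, List.filter_cons, hgt, not_lt.2 hgt.le, ih ht]; ring

theorem card_split (l : List ℤ) (h : ∀ z ∈ l, z ≠ 0) :
    Multiset.card (Pos l) + Multiset.card (Neg l) = l.length := by
  induction l with
  | nil => simp [Pos, Neg]
  | cons z t ih =>
    have hz := h z (by simp)
    have ht := fun w hw => h w (List.mem_cons_of_mem _ hw)
    have ih' := ih ht
    simp only [Pos, Neg, Multiset.coe_card] at ih' ⊢
    rcases lt_trichotomy z 0 with hlt | he | hgt
    · simp [List.filter_cons, hlt, not_lt.2 hlt.le]; omega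
    · exact absurd he hz
    · simp [List.filter_cons, hgt, not_lt.2 hgt.le]; omega

theorem sum_negZ {s : Multiset ℤ} (h : ∀ x ∈ s, x < 0) (hne : s ≠ 0) : s.sum < 0 := by
  induction s using Multiset.induction_on with
  | empty => exact absurd rfl hne
  | cons a t ih =>
    rcases eq_or_ne t 0 with rfl | hne'
    · simpa using h a (by simp)
    · have := ih (fun x hx => h x (Multiset.mem_cons_of_mem hx)) hne'
      have ha := h a (by simp)
      simp only [Multiset.sum_cons]; omega

theorem sum_posZ {s : Multiset ℤ} (h : ∀ x ∈ s, 0 < x) (hne : s ≠ 0) : 0 < s.sum := by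
  induction s using Multiset.induction_on with
  | empty => exact absurd rfl hne
  | cons a t ih =>
    rcases eq_or_ne t 0 with rfl | hne'
    · simpa using h a (by simp)
    · have := ih (fun x hx => h x (Multiset.mem_cons_of_mem hx)) hne'
      have ha := h a (by simp)
      simp only [Multiset.sum_cons]; omega

theorem eq_of_le_of_sum_ge {s t : Multiset ℕ} (hle : s ≤ t) (hpos : ∀ x ∈ t, 0 < x)
    (hsum : t.sum ≤ s.sum) : s = t := by
  obtain ⟨u, rfl⟩ := Multiset.le_iff_exists_add.1 hle
  have hu : u = 0 := by
    rcases eq_or_ne u 0 with h | h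
    · exact h
    · obtain ⟨x, hx⟩ := Multiset.exists_mem_of_ne_zero h
      have h1 := hpos x (by simp [hx])
      have h2 : x ≤ u.sum := Multiset.le_sum_of_mem hx
      have h3 := Multiset.sum_add s u
      omega
  simp [hu]

theorem sum_map_neg (s : Multiset ℤ) : (s.map (fun z => -z)).sum = -s.sum := by
  induction s using Multiset.induction_on with
  | empty => simp
  | cons a t ih => simp [ih]; ring

/-- Key distinctness of prefix sums, from irreducibility. -/

theorem prefix_sums_distinct {A B : Multiset ℕ} (irred : IrredPair A B)
    {l : List ℤ} (hnz : ∀ z ∈ l, z ≠ 0)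
    (hP : Pos l = Multiset.map (Nat.cast : ℕ → ℤ) A)
    (hN : Neg l = Multiset.map (fun b : ℕ => -(b : ℤ)) B) :
    ∀ i j, i < j → j < l.length → (l.take i).sum ≠ (l.take j).sum := by
  intro i j hij hj heq
  set seg := (l.drop i).take (j - i) with hseg
  have hlenseg : seg.length = j - i := by
    rw [hseg, List.length_take, List.length_drop]
    omega
  have htake : l.take j = l.take i ++ seg := by
    have := List.take_add (l := l) (i := i) (j := j - i)
    rwa [show i + (j - i) = j by omega] at this
  have hsegsum : seg.sum = 0 := by
    have := congrArg List.sum htake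
    rw [List.sum_append] at this
    omega
  have hsub : seg.Sublist l := ((List.take_sublist _ _).trans (List.drop_sublist _ _))
  have hsegnz : ∀ z ∈ seg, z ≠ 0 := fun z hz => hnz z (hsub.subset hz)
  have hsplit := sum_split seg hsegnz
  -- memberships
  have hposmem : ∀ x ∈ Pos seg, 0 < x := by
    intro x hx
    simp only [Pos, Multiset.mem_coe, List.mem_filter, decide_eq_true_eq] at hx
    exact hx.2
  have hnegmem : ∀ x ∈ Neg seg, x < 0 := by
    intro x hx
    simp only [Neg, Multiset.mem_coe, List.mem_filter, decide_eq_true_eq] at hx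
    exact hx.2
  -- transfer to ℕ multisets
  set A' : Multiset ℕ := (Pos seg).map Int.toNat with hA'
  set B' : Multiset ℕ := (Neg seg).map (fun z => (-z).toNat) with hB'
  have hA'cast : A'.map (Nat.cast : ℕ → ℤ) = Pos seg := by
    rw [hA', Multiset.map_map]
    have h1 : Multiset.map ((Nat.cast : ℕ → ℤ) ∘ Int.toNat) (Pos seg) = Multiset.map id (Pos seg) :=
      Multiset.map_congr rfl (fun x hx => by simp [Int.toNat_of_nonneg (hposmem x hx).le])
    rw [h1, Multiset.map_id]
  have hB'cast : B'.map (Nat.cast : ℕ → ℤ) = (Neg seg).map (fun z => -z) := by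
    rw [hB', Multiset.map_map]
    exact Multiset.map_congr rfl (fun x hx => Int.toNat_of_nonneg (by have := hnegmem x hx; omega))
  have hposle : Pos seg ≤ Pos l :=
    Multiset.coe_le.mpr ((hsub.filter _).subperm)
  have hnegle : Neg seg ≤ Neg l :=
    Multiset.coe_le.mpr ((hsub.filter _).subperm)
  have hA'le : A' ≤ A := by
    have := Multiset.map_le_map (f := Int.toNat) hposle
    rwa [hP, Multiset.map_map, show ((Int.toNat ∘ (Nat.cast : ℕ → ℤ))) = id by
      funext x; simp, Multiset.map_id] at this
  have hB'le : B' ≤ B := by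
    have := Multiset.map_le_map (f := fun z => (-z).toNat) hnegle
    rwa [hN, Multiset.map_map, show (((fun z : ℤ => (-z).toNat) ∘ (fun b : ℕ => -(b:ℤ)))) = id by
      funext x; simp, Multiset.map_id] at this
  -- sums
  have hA'sum : (A'.sum : ℤ) = (Pos seg).sum := by
    rw [Nat.cast_multiset_sum, hA'cast]
  have hB'sum : (B'.sum : ℤ) = -(Neg seg).sum := by
    rw [Nat.cast_multiset_sum, hB'cast, sum_map_neg]
  have hsumeq : A'.sum = B'.sum := by
    have : (A'.sum : ℤ) = (B'.sum : ℤ) := by omega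
    exact_mod_cast this
  -- nonemptiness
  have hsegne : seg ≠ [] := by
    intro h; rw [h] at hlenseg; simp at hlenseg; omega
  have hPosNegne : Pos seg ≠ 0 ∧ Neg seg ≠ 0 := by
    constructor
    · intro h
      have hNne : Neg seg ≠ 0 := by
        intro h2
        have := card_split seg hsegnz
        rw [h, h2] at this
        simp at this
        exact hsegne (List.length_eq_zero_iff.mp this.symm)
      have := sum_negZ hnegmem hNne
      rw [h] at hsplit
      simp at hsplit
      omega
    · intro h
      have hPne : Pos seg ≠ 0 := by
        intro h2
        have := card_split seg hsegnz
        rw [h, h2] at this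
        simp at this
        exact hsegne (List.length_eq_zero_iff.mp this.symm)
      have := sum_posZ hposmem hPne
      rw [h] at hsplit
      simp at hsplit
      omega
  have hA'ne : A' ≠ 0 := by
    rw [hA']
    intro h
    rw [← Multiset.card_eq_zero] at h
    rw [Multiset.card_map, Multiset.card_eq_zero] at h
    exact hPosNegne.1 h
  have hB'ne : B' ≠ 0 := by
    rw [hB']
    intro h
    rw [← Multiset.card_eq_zero] at h
    rw [Multiset.card_map, Multiset.card_eq_zero] at h
    exact hPosNegne.2 h
  -- cards
  have hcardlt : Multiset.card A' + Multiset.card B' < Multiset.card A + Multiset.card B := by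
    have h1 : Multiset.card A' + Multiset.card B' = seg.length := by
      rw [hA', hB', Multiset.card_map, Multiset.card_map]
      exact card_split seg hsegnz
    have h2 : Multiset.card A + Multiset.card B = l.length := by
      have := card_split l hnz
      rw [hP, hN, Multiset.card_map, Multiset.card_map] at this
      exact this
    omega
  have hA'neA : A' ≠ A := by
    intro h
    have hBB : B' = B := by
      apply eq_of_le_of_sum_ge hB'le irred.2.2.2.1
      rw [← hsumeq, h, irred.2.2.2.2.1]
    rw [h, hBB] at hcardlt
    omega
  have hB'neB : B' ≠ B := by
    intro h
    have hAA : A' = A := by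
      apply eq_of_le_of_sum_ge hA'le irred.2.2.1
      rw [hsumeq, h, irred.2.2.2.2.1]
    rw [h, hAA] at hcardlt
    omega
  exact irred.2.2.2.2.2 A' B' (lt_of_le_of_ne hA'le hA'neA) (lt_of_le_of_ne hB'le hB'neB)
    hA'ne hB'ne hsumeq

theorem eq_replicate_of_sum {s : Multiset ℕ} {c : ℕ} (hb : ∀ x ∈ s, x ≤ c)
    (hs : c * Multiset.card s ≤ s.sum) : s = Multiset.replicate (Multiset.card s) c := by
  rw [Multiset.eq_replicate]
  refine ⟨rfl, fun b hb' => ?_⟩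
  by_contra hne
  have hblt : b < c := lt_of_le_of_ne (hb b hb') hne
  obtain ⟨t, rfl⟩ := Multiset.exists_cons_of_mem hb'
  have hts : t.sum ≤ Multiset.card t * c := by
    have := Multiset.sum_le_card_nsmul t c (fun x hx => hb x (Multiset.mem_cons_of_mem hx))
    simpa [smul_eq_mul, mul_comm] using this
  simp only [Multiset.sum_cons, Multiset.card_cons] at hs ⊢
  have : c * (Multiset.card t + 1) = Multiset.card t * c + c := by ring
  omega

theorem irredPair_symm {A B : Multiset ℕ} (h : IrredPair A B) : IrredPair B A :=
  ⟨h.2.1, h.1, h.2.2.2.1, h.2.2.1, h.2.2.2.2.1.symm,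
   fun B' A' hB' hA' hB'ne hA'ne hs =>
     h.2.2.2.2.2 A' B' hA' hB' hA'ne hB'ne hs.symm⟩

theorem card_le_sum {s : Multiset ℕ} (h : ∀ x ∈ s, 0 < x) : Multiset.card s ≤ s.sum := by
  induction s using Multiset.induction_on with
  | empty => simp
  | cons a t ih =>
    have ha := h a (by simp)
    have := ih (fun x hx => h x (Multiset.mem_cons_of_mem hx))
    simp only [Multiset.card_cons, Multiset.sum_cons]
    omega

theorem pv_eq_map (d : ℤ) (l : List ℤ) :
    pv d l = (List.range l.length).map (fun i => d + (l.take i).sum) := by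
  induction l generalizing d with
  | nil => simp [pv]
  | cons z t ih =>
    simp only [pv, List.length_cons, List.range_succ_eq_map, List.map_cons, List.map_map,
      List.take_zero, List.sum_nil, add_zero]
    rw [ih (d + z)]
    congr 1
    apply List.map_congr_left
    intro i _
    simp [List.take_succ_cons, add_assoc]

/-- The main lemma: a `k`-irreducible pair with all of `B`'s elements `< k` and
total size `2k-1` is the canonical pair. -/
theorem main (k : ℕ) (hk : 1 < k) (A B : Multiset ℕ) (irred : IrredPair A B)
    (hAk : ∀ x ∈ A, x ≤ k) (hBk : ∀ x ∈ B, x < k)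
    (hN : Multiset.card A + Multiset.card B = 2 * k - 1) :
    A = Multiset.replicate (k - 1) k ∧ B = Multiset.replicate k (k - 1) := by
  have hApos := irred.2.2.1
  have hBpos := irred.2.2.2.1
  have hsumAB := irred.2.2.2.2.1
  -- the per-element claim
  have claim : ∀ b' ∈ B, b' = k - 1 ∧ Multiset.card A = k - 1 := by
    intro b' hb'
    have hb'pos := hBpos b' hb'
    set β := B.erase b' with hβ
    have hcons : b' ::ₘ β = B := Multiset.cons_erase hb'
    obtain ⟨l₀, hG₀, hP₀, hN₀⟩ := exists_greedy (Multiset.card A + Multiset.card β) A β rfl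
      hApos (fun x hx => hBpos x (Multiset.mem_of_mem_erase hx))
    have hstart : ((β.sum : ℤ) - A.sum) = -(b' : ℤ) := by
      have h0 : b' + β.sum = B.sum := by rw [← Multiset.sum_cons, hcons]
      have h1 : A.sum = B.sum := hsumAB
      omega
    rw [hstart] at hG₀
    set l : List ℤ := (-(b' : ℤ)) :: l₀ with hl
    have hG : G 0 l := by
      refine ⟨?_, ?_⟩
      · rw [if_neg (lt_irrefl 0)]
        omega
      · rw [zero_add]; exact hG₀
    have hP : Pos l = Multiset.map (Nat.cast : ℕ → ℤ) A := by
      have h1 : Pos l = Pos l₀ := by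
        simp [Pos, hl, List.filter_cons, show ¬((0:ℤ) < -(b':ℤ)) by omega]
      rw [h1, hP₀]
    have hNg : Neg l = Multiset.map (fun b : ℕ => -(b : ℤ)) B := by
      have h1 : Neg l = (-(b':ℤ)) ::ₘ Neg l₀ := by
        simp [Neg, hl, List.filter_cons, show ((-(b':ℤ)) < 0) by omega, hb'pos]
      have h2 := congrArg (Multiset.map (fun b : ℕ => -(b:ℤ))) hcons
      rw [Multiset.map_cons] at h2
      rw [h1, hN₀, h2]
    have hnz : ∀ z ∈ l, z ≠ 0 := G_nonzero hG
    have hlen : l.length = 2 * k - 1 := by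
      have h1 := card_split l hnz
      rw [hP, hNg, Multiset.card_map, Multiset.card_map] at h1
      omega
    -- entry bounds
    have hb : ∀ z ∈ l, z ≤ (k : ℤ) ∧ -((k : ℤ) - 1) ≤ z := by
      intro z hz
      rcases lt_trichotomy z 0 with hlt | he | hgt
      · have hzN : z ∈ Neg l := by
          simp [Neg, List.mem_filter, hz, hlt]
        rw [hNg] at hzN
        obtain ⟨b, hbB, rfl⟩ := Multiset.mem_map.1 hzN
        have hbk := hBk b hbB
        exact ⟨by omega, by omega⟩
      · exact absurd he (hnz z hz)
      · have hzP : z ∈ Pos l := by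
          simp [Pos, List.mem_filter, hz, hgt]
        rw [hP] at hzP
        obtain ⟨a, haA, rfl⟩ := Multiset.mem_map.1 hzP
        have hak := hAk a haA
        exact ⟨by omega, by omega⟩
    have hdist := prefix_sums_distinct irred hnz hP hNg
    set V := pv 0 l with hV
    have hVmap : V = (List.range l.length).map (fun i => 0 + (l.take i).sum) := pv_eq_map 0 l
    have hVlen : V.length = 2 * k - 1 := by rw [hV, length_pv, hlen]
    have hnodup : V.Nodup := by
      rw [hVmap]
      refine List.Nodup.map_on ?_ List.nodup_range
      intro x hx y hy hxy
      rw [List.mem_range] at hx hy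
      rcases lt_trichotomy x y with h | h | h
      · exact absurd (by simpa using hxy) (hdist x y h hy)
      · exact h
      · exact absurd (by simpa using hxy.symm) (hdist y x h hx)
    have hrange := G_range hG hb (by push_cast; omega) (by push_cast; omega)
    have hVsub : V.toFinset ⊆ Finset.Icc (-((k:ℤ)-1)) ((k:ℤ)-1) := by
      intro v hv
      rw [List.mem_toFinset] at hv
      have := hrange v hv
      rw [Finset.mem_Icc]
      exact ⟨this.1, this.2⟩
    have hIcccard : (Finset.Icc (-((k:ℤ)-1)) ((k:ℤ)-1)).card = 2 * k - 1 := by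
      rw [Int.card_Icc]
      omega
    have hVfin : V.toFinset = Finset.Icc (-((k:ℤ)-1)) ((k:ℤ)-1) := by
      apply Finset.eq_of_subset_of_card_le hVsub
      rw [List.toFinset_card_of_nodup hnodup, hVlen, hIcccard]
    -- b' = k - 1
    have hbot : (-(((k:ℤ))-1)) ∈ V := by
      rw [← List.mem_toFinset, hVfin, Finset.mem_Icc]
      omega
    have hboteq : b' = k - 1 := by
      rw [hVmap] at hbot
      obtain ⟨i, hi, hieq⟩ := List.mem_map.1 hbot
      rw [List.mem_range] at hi
      rw [zero_add] at hieq
      have hine : i ≠ 0 := by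
        intro h0
        rw [h0] at hieq
        simp at hieq
        omega
      obtain ⟨ip, rfl⟩ : ∃ ip, i = ip + 1 := ⟨i - 1, by omega⟩
      have hiplt : ip < l.length := by omega
      have hstep : (l.take (ip+1)).sum = (l.take ip).sum + l.get ⟨ip, hiplt⟩ := by
        have := List.sum_take_succ l ip hiplt
        simpa using this
      have hgetsign := G_get hG ip hiplt
      rw [zero_add] at hgetsign
      have hprevmem : (l.take ip).sum ∈ V := by
        rw [hVmap]
        exact List.mem_map.2 ⟨ip, List.mem_range.2 (by omega), by rw [zero_add]⟩
      have hprevbd := hrange _ hprevmem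
      have hgetbd := hb _ (List.get_mem l ⟨ip, hiplt⟩)
      by_cases hprev : (l.take ip).sum < 0
      · rw [if_pos hprev] at hgetsign
        omega
      · rw [if_neg hprev] at hgetsign
        have hprev0 : (l.take ip).sum = 0 := by omega
        have hip0 : ip = 0 := by
          by_contra hipne
          exact hdist 0 ip (by omega) (by omega) (by simpa using hprev0.symm)
        rw [hip0] at hieq
        have h01 : (List.take (0+1) l).sum = -(b' : ℤ) := by
          show (List.take 1 ((-(b' : ℤ)) :: l₀)).sum = -(b' : ℤ)
          simp
        rw [h01] at hieq
        omega
    refine ⟨hboteq, ?_⟩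
    -- count: card A = k - 1
    have hcA : Multiset.card A = l.countP (fun z => decide (0 < z)) := by
      have : Multiset.card (Pos l) = Multiset.card A := by rw [hP, Multiset.card_map]
      rw [← this, Pos, Multiset.coe_card, List.countP_eq_length_filter]
    have hcV := G_countP hG
    have hVcount : V.countP (fun v => decide (v < 0)) = k - 1 := by
      rw [List.countP_eq_length_filter]
      have hfn : (V.filter (fun v => decide (v < 0))).Nodup := hnodup.filter _
      rw [← List.toFinset_card_of_nodup hfn, List.toFinset_filter, hVfin]
      have : Finset.filter (fun x => decide (x < 0) = true) (Finset.Icc (-((k:ℤ)-1)) ((k:ℤ)-1))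
          = Finset.Icc (-((k:ℤ)-1)) (-1) := by
        ext x
        simp only [Finset.mem_filter, Finset.mem_Icc, decide_eq_true_eq]
        omega
      rw [this, Int.card_Icc]
      omega
    rw [hcA, hcV, ← hV, hVcount]
  -- assemble
  obtain ⟨b₀, hb₀⟩ := Multiset.exists_mem_of_ne_zero irred.2.1
  have hcardA : Multiset.card A = k - 1 := (claim b₀ hb₀).2
  have hcardB : Multiset.card B = k := by omega
  have hBrep : B = Multiset.replicate k (k - 1) :=
    Multiset.eq_replicate.2 ⟨hcardB, fun b hb => (claim b hb).1⟩
  have hBsum : B.sum = k * (k - 1) := by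
    rw [hBrep, Multiset.sum_replicate, smul_eq_mul]
  have hAsum : A.sum = k * (k - 1) := by rw [hsumAB, hBsum]
  have hArep : A = Multiset.replicate (Multiset.card A) k :=
    eq_replicate_of_sum hAk (by rw [hAsum, hcardA])
  rw [hcardA] at hArep
  exact ⟨hArep, hBrep⟩

end Stmt7Aux

theorem stmt7 (k : ℕ) (hk : 1 < k) (A B : Multiset ℕ) (h : KIrredPair k A B) :
    Multiset.card A + Multiset.card B = 2 * k - 1 ↔
      ((A = Multiset.replicate (k - 1) k ∧ B = Multiset.replicate k (k - 1)) ∨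
       (A = Multiset.replicate k (k - 1) ∧ B = Multiset.replicate (k - 1) k)) := by
  obtain ⟨irred, hAk, hBk⟩ := h
  constructor
  · intro hN
    by_cases hkB : k ∈ B
    · -- k ∈ B, show k ∉ A, apply main to (B, A)
      have hkA : k ∉ A := by
        intro hkA
        -- both sides have ≥ 2 elements
        have hA2 : 2 ≤ Multiset.card A := by
          by_contra h2
          have h1 : Multiset.card A = 1 := by
            have := Multiset.card_pos.2 irred.1
            omega
          obtain ⟨a, ha⟩ := Multiset.card_eq_one.1 h1
          subst ha
          rw [Multiset.mem_singleton] at hkA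
          subst hkA
          have hBsum : B.sum = k := by
            rw [← irred.2.2.2.2.1]; simp
          have hBcons : k ::ₘ B.erase k = B := Multiset.cons_erase hkB
          have hBcard : Multiset.card (B.erase k) = 2 * k - 3 := by
            have := congrArg Multiset.card hBcons
            simp only [Multiset.card_cons] at this
            simp only [Multiset.card_singleton] at hN
            omega
          have hle : Multiset.card (B.erase k) ≤ (B.erase k).sum :=
            Stmt7Aux.card_le_sum (fun x hx => irred.2.2.2.1 x (Multiset.mem_of_mem_erase hx))
          have : k + (B.erase k).sum = B.sum := by rw [← Multiset.sum_cons, hBcons]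
          omega
        have hB2 : 2 ≤ Multiset.card B := by
          by_contra h2
          have h1 : Multiset.card B = 1 := by
            have := Multiset.card_pos.2 irred.2.1
            omega
          obtain ⟨b, hb⟩ := Multiset.card_eq_one.1 h1
          subst hb
          rw [Multiset.mem_singleton] at hkB
          subst hkB
          have hAsum : A.sum = k := by
            rw [irred.2.2.2.2.1]; simp
          have hAcons : k ::ₘ A.erase k = A := Multiset.cons_erase hkA
          have hAcard : Multiset.card (A.erase k) = 2 * k - 3 := by
            have := congrArg Multiset.card hAcons
            simp only [Multiset.card_cons] at this
            simp only [Multiset.card_singleton] at hN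
            omega
          have hle : Multiset.card (A.erase k) ≤ (A.erase k).sum :=
            Stmt7Aux.card_le_sum (fun x hx => irred.2.2.1 x (Multiset.mem_of_mem_erase hx))
          have : k + (A.erase k).sum = A.sum := by rw [← Multiset.sum_cons, hAcons]
          omega
        have hltA : ({k} : Multiset ℕ) < A := by
          apply lt_of_le_of_ne (Multiset.singleton_le.mpr hkA)
          intro h
          rw [← h] at hA2
          simp at hA2
        have hltB : ({k} : Multiset ℕ) < B := by
          apply lt_of_le_of_ne (Multiset.singleton_le.mpr hkB)
          intro h
          rw [← h] at hB2
          simp at hB2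
        exact irred.2.2.2.2.2 {k} {k} hltA hltB (by simp) (by simp) rfl
      have hAk' : ∀ x ∈ A, x < k := fun x hx =>
        lt_of_le_of_ne (hAk x hx) (by rintro rfl; exact hkA hx)
      have := Stmt7Aux.main k hk B A (Stmt7Aux.irredPair_symm irred) hBk hAk'
        (by omega)
      exact Or.inr ⟨this.2, this.1⟩
    · have hBk' : ∀ x ∈ B, x < k := fun x hx =>
        lt_of_le_of_ne (hBk x hx) (by rintro rfl; exact hkB hx)
      exact Or.inl (Stmt7Aux.main k hk A B irred hAk hBk' hN)
  · rintro (⟨rfl, rfl⟩ | ⟨rfl, rfl⟩) <;>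
      simp [Multiset.card_replicate] <;> omega
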